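/- arXiv:2002.11230 — 2 statements merged into one kernel-verified Lean document; each statement's English description precedes it below -/
import Mathlib

section
/- Let Γ be a group, K a Γ-graded division ring with support Γ_K, γ₁,…,γₙ ∈ Γ, and R = Mₙ(K)(γ₁,…,γₙ). Then R is a crossed product if and only if the set {γ₁Γ_K, …, γₙΓ_K} equals Γ/Γ_K and every left coset of Γ_K appears the same number of times in the list γ₁Γ_K, …, γₙΓ_K (i.e., for all i,j ∈ {1,…,n}, the number of indices l with γ_lΓ_K = γᵢΓ_K equals the number of indices l with γ_lΓ_K = γⱼΓ_K). -/
open Pointwise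

structure RingGrading (Γ : Type) [Group Γ] (R : Type) [Ring R] where
  component : Γ → AddSubgroup R
  one_mem : (1 : R) ∈ component 1
  mul_mem : ∀ {γ δ : Γ} {a b : R}, a ∈ component γ → b ∈ component δ →
    a * b ∈ component (γ * δ)
  iSup_eq_top : (⨆ γ : Γ, component γ) = ⊤
  independent : iSupIndep component

variable {Γ : Type} [Group Γ] {R : Type} [Ring R]

def matrixComponent (g : RingGrading Γ R) (n : ℕ) (γv : Fin n → Γ) (δ : Γ) :
    AddSubgroup (Matrix (Fin n) (Fin n) R) where
  carrier := {M | ∀ i j, M i j ∈ g.component ((γv i)⁻¹ * δ * γv j)}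
  add_mem' := by
    intro a b ha hb i j
    simpa [Matrix.add_apply] using add_mem (ha i j) (hb i j)
  zero_mem' := by
    intro i j
    simpa using zero_mem (g.component ((γv i)⁻¹ * δ * γv j))
  neg_mem' := by
    intro a ha i j
    simpa [Matrix.neg_apply] using neg_mem (ha i j)

/-- A `Γ`-graded ring (given by its components) is strongly graded if
`R_γ R_δ = R_{γδ}` for all `γ, δ`; since the inclusion `R_γ R_δ ⊆ R_{γδ}` always
holds in a graded ring, this is the nontrivial inclusion. -/
def StronglyGraded {S : Type} [Ring S] (c : Γ → AddSubgroup S) : Prop :=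
  ∀ γ δ : Γ, c (γ * δ) ≤ AddSubgroup.closure ((c γ : Set S) * (c δ : Set S))

/-- A unital graded ring is a crossed product if every component contains an invertible
element. -/
def IsCrossedProduct {S : Type} [Ring S] (c : Γ → AddSubgroup S) : Prop :=
  ∀ γ : Γ, ∃ u : Sˣ, (u : S) ∈ c γ

/-- Graded unit-regular: every `a ∈ R_γ` satisfies `a = a u a` for some unit `u ∈ R_{γ⁻¹}`. -/
def GradedUnitRegular {S : Type} [Ring S] (c : Γ → AddSubgroup S) : Prop :=
  ∀ (γ : Γ) (a : S), a ∈ c γ → ∃ u : Sˣ, (u : S) ∈ c γ⁻¹ ∧ a = a * u * a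

/-- A `Γ`-graded division ring: a graded ring in which every nonzero homogeneous element
is invertible. -/
structure GradedDivRing (Γ : Type) [Group Γ] (K : Type) [Ring K] extends
    RingGrading Γ K where
  isUnit_of_homogeneous : ∀ {γ : Γ} {a : K}, a ∈ component γ → a ≠ 0 → IsUnit a

/-- The support `Γ_R = {γ | R_γ ≠ 0}` of a grading. -/
def RingGrading.support (g : RingGrading Γ R) : Set Γ := {γ : Γ | g.component γ ≠ ⊥}

def IsGradedIso {Γ R S : Type} [AddGroup R] [Mul R] [AddGroup S] [Mul S]
    (cR : Γ → AddSubgroup R) (cS : Γ → AddSubgroup S) : Prop :=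
  ∃ e : R ≃+* S, ∀ (γ : Γ) (x : R), x ∈ cR γ ↔ e x ∈ cS γ

/-- The identity component `R_ε` of the graded matrix ring, as a subring. -/
def matrixIdentitySubring (g : RingGrading Γ R) (n : ℕ) (γv : Fin n → Γ) :
    Subring (Matrix (Fin n) (Fin n) R) where
  carrier := matrixComponent g n γv 1
  add_mem' := add_mem
  zero_mem' := zero_mem _
  neg_mem' := neg_mem
  one_mem' := by
    intro i j
    by_cases h : i = j
    · subst h
      rw [Matrix.one_apply_eq]
      have hh : (γv i)⁻¹ * 1 * γv i = 1 := by group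
      rw [hh]; exact g.one_mem
    · rw [Matrix.one_apply_ne h]
      exact zero_mem _
  mul_mem' := by
    intro a b ha hb i j
    show (a * b) i j ∈ _
    rw [Matrix.mul_apply]
    refine AddSubgroup.sum_mem _ fun k _ => ?_
    have h := g.mul_mem (ha i k) (hb k j)
    have hh : (γv i)⁻¹ * 1 * γv k * ((γv k)⁻¹ * 1 * γv j) = (γv i)⁻¹ * 1 * γv j := by group
    rwa [hh] at h

/-- The degree-`γ` component `A·γ` of the group ring `A[Γ]`. -/
def monoidAlgebraComponent (A : Type) [Ring A] (Γ : Type) [Group Γ] (γ : Γ) :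
    AddSubgroup (MonoidAlgebra A Γ) where
  carrier := {f | ∀ δ : Γ, δ ≠ γ → f.coeff δ = 0}
  add_mem' := by
    intro f h hf hh δ hδ
    show (f + h).coeff δ = 0
    rw [MonoidAlgebra.coeff_add]
    rw [Finsupp.add_apply, hf δ hδ, hh δ hδ, add_zero]
  zero_mem' := fun δ _ => rfl
  neg_mem' := by
    intro f hf δ hδ
    show (-f).coeff δ = 0
    rw [MonoidAlgebra.coeff_neg]
    rw [Finsupp.neg_apply, hf δ hδ, neg_zero]


section Aux
variable {Γ : Type} [Group Γ] {K : Type} [Ring K]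


attribute [local instance] Classical.propDecidable

/-- Existence of homogeneous decompositions. -/
theorem RingGrading.exists_decomp (g : RingGrading Γ K) (x : K) :
    ∃ (s : Finset Γ) (f : Γ → K), (∀ δ, f δ ∈ g.component δ) ∧ (∀ δ ∉ s, f δ = 0) ∧
      x = ∑ δ ∈ s, f δ := by
  have hx : x ∈ ⨆ γ, g.component γ := by rw [g.iSup_eq_top]; trivial
  refine AddSubgroup.iSup_induction (C := fun y =>
    ∃ (s : Finset Γ) (f : Γ → K), (∀ δ, f δ ∈ g.component δ) ∧ (∀ δ ∉ s, f δ = 0) ∧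
      y = ∑ δ ∈ s, f δ) _ hx ?_ ?_ ?_
  · intro i y hy
    classical
    refine ⟨{i}, fun δ => if δ = i then y else 0, fun δ => ?_, fun δ hδ => ?_, ?_⟩
    · by_cases h : δ = i
      · subst h; simp only [if_pos rfl]; exact hy
      · simp only [if_neg h]; exact zero_mem _
    · dsimp only; rw [if_neg]; intro h; exact hδ (by simp [h])
    · simp
  · exact ⟨∅, 0, fun δ => zero_mem _, fun _ _ => rfl, by simp⟩
  · rintro x y ⟨s, f, hf, hf0, rfl⟩ ⟨t, h, hh, hh0, rfl⟩
    refine ⟨s ∪ t, f + h, fun δ => add_mem (hf δ) (hh δ), fun δ hδ => ?_, ?_⟩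
    · have h1 : δ ∉ s := fun hs => hδ (Finset.mem_union_left _ hs)
      have h2 : δ ∉ t := fun hs => hδ (Finset.mem_union_right _ hs)
      simp [hf0 δ h1, hh0 δ h2]
    · simp only [Pi.add_apply]
      rw [Finset.sum_add_distrib,Finset.sum_subset Finset.subset_union_left (fun δ _ hδ => hf0 δ hδ),
        Finset.sum_subset Finset.subset_union_right (fun δ _ hδ => hh0 δ hδ)]

/-- Uniqueness: a homogeneous decomposition of zero is trivial. -/
theorem RingGrading.eq_zero_of_sum_eq_zero (g : RingGrading Γ K) {s : Finset Γ} {f : Γ → K}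
    (hf : ∀ δ, f δ ∈ g.component δ) (h : ∑ δ ∈ s, f δ = 0) : ∀ δ ∈ s, f δ = 0 := by
  intro δ0 hδ0
  have hmem : f δ0 ∈ ⨆ (δ : Γ) (_ : δ ≠ δ0), g.component δ := by
    have he : ∑ δ ∈ s.erase δ0, f δ + f δ0 = 0 := by
      rw [Finset.sum_erase_add s f hδ0, h]
    have : f δ0 = -∑ δ ∈ s.erase δ0, f δ := eq_neg_of_add_eq_zero_right he
    rw [this]
    refine neg_mem (AddSubgroup.sum_mem _ fun δ hδ => ?_)
    exact AddSubgroup.mem_iSup_of_mem δ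
      (AddSubgroup.mem_iSup_of_mem (Finset.ne_of_mem_erase hδ) (hf δ))
  have := (g.independent δ0).le_bot (AddSubgroup.mem_inf.mpr ⟨hf δ0, hmem⟩)
  exact AddSubgroup.mem_bot.mp this

/-- Uniqueness of decompositions as functions. -/
theorem RingGrading.decomp_unique (g : RingGrading Γ K) {s t : Finset Γ} {f h : Γ → K}
    (hf : ∀ δ, f δ ∈ g.component δ) (hf0 : ∀ δ ∉ s, f δ = 0)
    (hh : ∀ δ, h δ ∈ g.component δ) (hh0 : ∀ δ ∉ t, h δ = 0)
    (heq : ∑ δ ∈ s, f δ = ∑ δ ∈ t, h δ) : f = h := by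
  have key : ∀ δ ∈ s ∪ t, f δ - h δ = 0 := by
    refine g.eq_zero_of_sum_eq_zero (f := f - h) (fun δ => sub_mem (hf δ) (hh δ)) ?_
    have h1 : ∑ δ ∈ s ∪ t, f δ = ∑ δ ∈ s, f δ :=
      (Finset.sum_subset Finset.subset_union_left (fun δ _ hδ => hf0 δ hδ)).symm
    have h2 : ∑ δ ∈ s ∪ t, h δ = ∑ δ ∈ t, h δ :=
      (Finset.sum_subset Finset.subset_union_right (fun δ _ hδ => hh0 δ hδ)).symm
    calc ∑ δ ∈ s ∪ t, (f - h) δ = ∑ δ ∈ s ∪ t, (f δ - h δ) := rfl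
      _ = ∑ δ ∈ s ∪ t, f δ - ∑ δ ∈ s ∪ t, h δ := Finset.sum_sub_distrib f h
      _ = 0 := by rw [h1, h2, heq, sub_self]
  funext δ
  by_cases hδ : δ ∈ s ∪ t
  · exact sub_eq_zero.mp (key δ hδ)
  · rw [hf0 δ (fun h' => hδ (Finset.mem_union_left _ h')),
      hh0 δ (fun h' => hδ (Finset.mem_union_right _ h'))]

noncomputable def RingGrading.decompSupp (g : RingGrading Γ K) (x : K) : Finset Γ :=
  (g.exists_decomp x).choose

noncomputable def RingGrading.decompFun (g : RingGrading Γ K) (x : K) : Γ → K :=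
  (g.exists_decomp x).choose_spec.choose

theorem RingGrading.decompFun_mem (g : RingGrading Γ K) (x : K) (δ : Γ) :
    g.decompFun x δ ∈ g.component δ :=
  (g.exists_decomp x).choose_spec.choose_spec.1 δ

theorem RingGrading.decompFun_zero (g : RingGrading Γ K) (x : K) :
    ∀ δ ∉ g.decompSupp x, g.decompFun x δ = 0 :=
  (g.exists_decomp x).choose_spec.choose_spec.2.1

theorem RingGrading.decompFun_sum (g : RingGrading Γ K) (x : K) :
    x = ∑ δ ∈ g.decompSupp x, g.decompFun x δ :=
  (g.exists_decomp x).choose_spec.choose_spec.2.2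

/-- Master lemma: the decomposition function agrees with any decomposition. -/
theorem RingGrading.decompFun_eq (g : RingGrading Γ K) {x : K} {s : Finset Γ} {f : Γ → K}
    (hf : ∀ δ, f δ ∈ g.component δ) (hf0 : ∀ δ ∉ s, f δ = 0) (hx : x = ∑ δ ∈ s, f δ) :
    g.decompFun x = f :=
  g.decomp_unique (g.decompFun_mem x) (g.decompFun_zero x) hf hf0
    (by rw [← g.decompFun_sum x, ← hx])

/-- The projection onto the identity component, as an additive monoid hom. -/
noncomputable def RingGrading.proj (g : RingGrading Γ K) : K →+ K where
  toFun x := g.decompFun x 1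
  map_zero' := by
    have : g.decompFun 0 = fun _ => (0 : K) :=
      g.decompFun_eq (s := ∅) (fun δ => zero_mem _) (fun _ _ => rfl) (by simp)
    exact congrFun this 1
  map_add' x y := by
    have : g.decompFun (x + y) = fun δ => g.decompFun x δ + g.decompFun y δ := by
      refine g.decompFun_eq (s := g.decompSupp x ∪ g.decompSupp y)
        (fun δ => add_mem (g.decompFun_mem x δ) (g.decompFun_mem y δ)) (fun δ hδ => ?_) ?_
      · rw [g.decompFun_zero x δ (fun h => hδ (Finset.mem_union_left _ h)),
          g.decompFun_zero y δ (fun h => hδ (Finset.mem_union_right _ h)), add_zero]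
      · rw [Finset.sum_add_distrib,
          ← Finset.sum_subset Finset.subset_union_left (fun δ _ hδ => g.decompFun_zero x δ hδ),
          ← Finset.sum_subset Finset.subset_union_right (fun δ _ hδ => g.decompFun_zero y δ hδ),
          ← g.decompFun_sum x, ← g.decompFun_sum y]
    exact congrFun this 1

theorem RingGrading.decompFun_of_mem (g : RingGrading Γ K) {x : K} {η : Γ}
    (hx : x ∈ g.component η) : g.decompFun x = fun δ => if δ = η then x else 0 := by
  refine g.decompFun_eq (s := {η}) (fun δ => ?_) (fun δ hδ => ?_) (by simp)
  · by_cases h : δ = η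
    · subst h; simpa using hx
    · simp only [if_neg h]; exact zero_mem _
  · rw [if_neg]; intro h; exact hδ (by simp [h])

theorem RingGrading.proj_mem (g : RingGrading Γ K) (x : K) : g.proj x ∈ g.component 1 :=
  g.decompFun_mem x 1

theorem RingGrading.proj_of_mem_one (g : RingGrading Γ K) {x : K}
    (hx : x ∈ g.component 1) : g.proj x = x := by
  show g.decompFun x 1 = x
  rw [g.decompFun_of_mem hx]
  show (if (1:Γ) = 1 then x else 0) = x
  rw [if_pos rfl]

theorem RingGrading.proj_of_mem_ne (g : RingGrading Γ K) {x : K} {η : Γ} (hη : η ≠ 1)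
    (hx : x ∈ g.component η) : g.proj x = 0 := by
  show g.decompFun x 1 = 0
  rw [g.decompFun_of_mem hx]
  show (if (1:Γ) = η then x else 0) = 0
  rw [if_neg (fun h => hη h.symm)]

theorem RingGrading.proj_mul_left (g : RingGrading Γ K) {a : K} (ha : a ∈ g.component 1)
    (x : K) : g.proj (a * x) = a * g.proj x := by
  have hd : g.decompFun (a * x) = fun δ => a * g.decompFun x δ := by
    refine g.decompFun_eq (s := g.decompSupp x) (fun δ => ?_) (fun δ hδ => ?_) ?_
    · have := g.mul_mem ha (g.decompFun_mem x δ)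
      rwa [one_mul] at this
    · rw [g.decompFun_zero x δ hδ, mul_zero]
    · rw [← Finset.mul_sum, ← g.decompFun_sum x]
  show g.decompFun (a * x) 1 = a * g.decompFun x 1
  rw [hd]

theorem RingGrading.proj_mul_right (g : RingGrading Γ K) {a : K} (ha : a ∈ g.component 1)
    (x : K) : g.proj (x * a) = g.proj x * a := by
  have hd : g.decompFun (x * a) = fun δ => g.decompFun x δ * a := by
    refine g.decompFun_eq (s := g.decompSupp x) (fun δ => ?_) (fun δ hδ => ?_) ?_
    · have := g.mul_mem (g.decompFun_mem x δ) ha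
      rwa [mul_one] at this
    · rw [g.decompFun_zero x δ hδ, zero_mul]
    · rw [← Finset.sum_mul, ← g.decompFun_sum x]
  show g.decompFun (x * a) 1 = g.decompFun x 1 * a
  rw [hd]

/-- The inverse of a homogeneous unit is homogeneous of inverse degree. -/
theorem RingGrading.unit_inv_mem (g : RingGrading Γ K) {γ : Γ} (u : Kˣ)
    (hu : (u : K) ∈ g.component γ) : ((u⁻¹ : Kˣ) : K) ∈ g.component γ⁻¹ := by
  have hone : g.decompFun (1 : K) = fun δ => if δ = 1 then (1:K) else 0 :=
    g.decompFun_of_mem g.one_mem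
  have hmul : g.decompFun (1 : K) = fun η => (u : K) * g.decompFun ((u⁻¹ : Kˣ) : K) (γ⁻¹ * η) := by
    refine g.decompFun_eq (s := (g.decompSupp ((u⁻¹ : Kˣ) : K)).image (γ * ·)) (fun η => ?_) (fun η hη => ?_) ?_
    · have := g.mul_mem hu (g.decompFun_mem ((u⁻¹ : Kˣ) : K) (γ⁻¹ * η))
      rwa [mul_inv_cancel_left] at this
    · have : γ⁻¹ * η ∉ g.decompSupp ((u⁻¹ : Kˣ) : K) := by
        intro hmem
        exact hη (Finset.mem_image.mpr ⟨γ⁻¹ * η, hmem, by group⟩)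
      rw [g.decompFun_zero ((u⁻¹ : Kˣ) : K) _ this, mul_zero]
    · rw [Finset.sum_image (fun a _ c _ h => mul_left_cancel h)]
      have : ∀ δ ∈ g.decompSupp ((u⁻¹ : Kˣ) : K), (u : K) * g.decompFun ((u⁻¹ : Kˣ) : K) (γ⁻¹ * (γ * δ)) = (u : K) * g.decompFun ((u⁻¹ : Kˣ) : K) δ := by
        intro δ _; rw [inv_mul_cancel_left]
      rw [Finset.sum_congr rfl this, ← Finset.mul_sum, ← g.decompFun_sum ((u⁻¹ : Kˣ) : K)]
      exact (Units.mul_inv u).symm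
  have key : ∀ δ : Γ, δ ≠ γ⁻¹ → g.decompFun ((u⁻¹ : Kˣ) : K) δ = 0 := by
    intro δ hδ
    have h1 : (u : K) * g.decompFun ((u⁻¹ : Kˣ) : K) δ = if γ * δ = 1 then (1:K) else 0 := by
      have := congrFun (hmul.symm.trans hone) (γ * δ)
      rwa [inv_mul_cancel_left] at this
    rw [if_neg (fun h => hδ (eq_inv_of_mul_eq_one_right h))] at h1
    calc g.decompFun ((u⁻¹ : Kˣ) : K) δ = ((u⁻¹ : Kˣ) : K) * ((u : K) * g.decompFun ((u⁻¹ : Kˣ) : K) δ) := by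
          rw [← mul_assoc, Units.inv_mul, one_mul]
      _ = 0 := by rw [h1, mul_zero]
  rw [g.decompFun_sum ((u⁻¹ : Kˣ) : K)]
  refine AddSubgroup.sum_mem _ fun δ hδ => ?_
  by_cases h : δ = γ⁻¹
  · subst h; exact g.decompFun_mem ((u⁻¹ : Kˣ) : K) γ⁻¹
  · rw [key δ h]; exact zero_mem _

theorem RingGrading.mem_support_iff (g : RingGrading Γ K) {γ : Γ} :
    γ ∈ g.support ↔ ∃ a ∈ g.component γ, a ≠ 0 := by
  constructor
  · intro h
    by_contra hc
    push_neg at hc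
    exact h ((AddSubgroup.eq_bot_iff_forall _).mpr hc)
  · rintro ⟨a, ha, hne⟩ hbot
    exact hne ((AddSubgroup.eq_bot_iff_forall _).mp hbot a ha)

theorem RingGrading.mem_support_of_ne (g : RingGrading Γ K) {γ : Γ} {a : K}
    (ha : a ∈ g.component γ) (hne : a ≠ 0) : γ ∈ g.support :=
  g.mem_support_iff.mpr ⟨a, ha, hne⟩

section Nontriv
variable [Nontrivial K]

theorem unit_ne_zero' (u : Kˣ) : (u : K) ≠ 0 := by
  intro h
  have h2 := Units.mul_inv u
  rw [h, zero_mul] at h2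
  exact one_ne_zero h2.symm

theorem GradedDivRing.exists_unit (g : GradedDivRing Γ K) {γ : Γ}
    (h : γ ∈ g.toRingGrading.support) : ∃ u : Kˣ, (u : K) ∈ g.component γ := by
  obtain ⟨a, ha, hne⟩ := g.toRingGrading.mem_support_iff.mp h
  obtain ⟨u, rfl⟩ := g.isUnit_of_homogeneous ha hne
  exact ⟨u, ha⟩

theorem GradedDivRing.one_mem_support (g : GradedDivRing Γ K) :
    (1 : Γ) ∈ g.toRingGrading.support :=
  g.toRingGrading.mem_support_of_ne g.one_mem one_ne_zero

theorem GradedDivRing.mul_mem_support (g : GradedDivRing Γ K) {γ δ : Γ}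
    (hγ : γ ∈ g.toRingGrading.support) (hδ : δ ∈ g.toRingGrading.support) :
    γ * δ ∈ g.toRingGrading.support := by
  obtain ⟨u, hu⟩ := g.exists_unit hγ
  obtain ⟨v, hv⟩ := g.exists_unit hδ
  exact g.toRingGrading.mem_support_of_ne (g.mul_mem hu hv)
    (by rw [← Units.val_mul]; exact unit_ne_zero' (u * v))

theorem GradedDivRing.inv_mem_support (g : GradedDivRing Γ K) {γ : Γ}
    (hγ : γ ∈ g.toRingGrading.support) : γ⁻¹ ∈ g.toRingGrading.support := by
  obtain ⟨u, hu⟩ := g.exists_unit hγ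
  exact g.toRingGrading.mem_support_of_ne (g.toRingGrading.unit_inv_mem u hu)
    (unit_ne_zero' u⁻¹)

end Nontriv

/-- The identity component of `K` as a subring. -/
def GradedDivRing.oneSubring (g : GradedDivRing Γ K) : Subring K where
  carrier := g.component 1
  zero_mem' := zero_mem _
  add_mem' := fun ha hb => add_mem ha hb
  neg_mem' := fun ha => neg_mem ha
  one_mem' := g.one_mem
  mul_mem' := fun {a b} ha hb => by have := g.mul_mem ha hb; rwa [one_mul] at this

theorem GradedDivRing.oneSubring_isUnit_or_eq_zero (g : GradedDivRing Γ K)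
    (a : g.oneSubring) : IsUnit a ∨ a = 0 := by
  by_cases h : (a : K) = 0
  · right; exact Subtype.ext h
  · left
    obtain ⟨u, hu⟩ := g.isUnit_of_homogeneous a.2 h
    have hinv : ((u⁻¹ : Kˣ) : K) ∈ g.component 1 := by
      have := g.toRingGrading.unit_inv_mem u (by rw [hu]; exact a.2)
      rwa [inv_one] at this
    refine ⟨⟨a, ⟨((u⁻¹ : Kˣ) : K), hinv⟩, ?_, ?_⟩, rfl⟩
    · refine Subtype.ext ?_
      show (a : K) * ((u⁻¹ : Kˣ) : K) = 1
      rw [← hu, Units.mul_inv]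
    · refine Subtype.ext ?_
      show ((u⁻¹ : Kˣ) : K) * (a : K) = 1
      rw [← hu, Units.inv_mul]

theorem sum_subtype_of_zero_off {n : ℕ} {M : Type} [AddCommMonoid M] (S : Set (Fin n))
    [Fintype ↥S] (F : Fin n → M) (hF : ∀ k, k ∉ S → F k = 0) :
    ∑ k : ↥S, F ↑k = ∑ k : Fin n, F k := by
  classical
  have h1 : ∑ a ∈ Finset.univ.filter (· ∈ S), F a = ∑ a : ↥S, F ↑a :=
    Finset.sum_subtype _ (by simp) F
  rw [← h1, Finset.sum_filter_of_ne (fun k _ hk => by_contra fun hmem => hk (hF k hmem))]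


theorem sum_subtype_of_zero_off' {n : ℕ} {M : Type} [AddCommMonoid M] {P : Fin n → Prop}
    [DecidablePred P] (F : Fin n → M) (hF : ∀ k, ¬ P k → F k = 0) :
    ∑ k : {k : Fin n // P k}, F ↑k = ∑ k : Fin n, F k := by
  classical
  have h1 : ∑ a ∈ Finset.univ.filter P, F a = ∑ a : {k : Fin n // P k}, F ↑a :=
    Finset.sum_subtype _ (by simp) F
  rw [← h1, Finset.sum_filter_of_ne (fun k _ hk => by_contra fun hmem => hk (hF k hmem))]

theorem ncard_eq_card_subtype {n : ℕ} (S : Set (Fin n)) [Fintype ↥S] :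
    S.ncard = Fintype.card ↥S := by
  rw [← Nat.card_coe_set_eq, Nat.card_eq_fintype_card]

theorem card_eq_of_inv_pair {D : Type} [DivisionRing D]
    {I J : Type} [Fintype I] [Fintype J] [DecidableEq I] [DecidableEq J]
    (A : I → J → D) (B : J → I → D)
    (h1 : ∀ l l', ∑ m, A l m * B m l' = if l = l' then 1 else 0)
    (h2 : ∀ m m', ∑ l, B m l * A l m' = if m = m' then 1 else 0) :
    Fintype.card I = Fintype.card J := by
  let φ : (I → D) →ₗ[D] (J → D) :=
    { toFun := fun v m => ∑ l, v l * A l m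
      map_add' := by
        intro v w; funext m
        simp [add_mul, Finset.sum_add_distrib]
      map_smul' := by
        intro c v; funext m
        simp [smul_eq_mul, Finset.mul_sum, mul_assoc] }
  let ψ : (J → D) →ₗ[D] (I → D) :=
    { toFun := fun w l => ∑ m, w m * B m l
      map_add' := by
        intro v w; funext l
        simp [add_mul, Finset.sum_add_distrib]
      map_smul' := by
        intro c v; funext l
        simp [smul_eq_mul, Finset.mul_sum, mul_assoc] }
  have comp1 : ∀ (w : J → D) (m' : J), ∑ l, (∑ m, w m * B m l) * A l m' = w m' := by
    intro w m'
    have e1 : ∀ l, (∑ m, w m * B m l) * A l m' = ∑ m, w m * (B m l * A l m') := by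
      intro l
      rw [Finset.sum_mul]
      exact Finset.sum_congr rfl fun m _ => by rw [mul_assoc]
    rw [Finset.sum_congr rfl fun l _ => e1 l, Finset.sum_comm]
    have e2 : ∀ m, ∑ l, w m * (B m l * A l m') = w m * (if m = m' then 1 else 0) := by
      intro m; rw [← Finset.mul_sum, h2 m m']
    rw [Finset.sum_congr rfl fun m _ => e2 m]
    simp [mul_ite]
  have comp2 : ∀ (v : I → D) (l' : I), ∑ m, (∑ l, v l * A l m) * B m l' = v l' := by
    intro v l'
    have e1 : ∀ m, (∑ l, v l * A l m) * B m l' = ∑ l, v l * (A l m * B m l') := by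
      intro m
      rw [Finset.sum_mul]
      exact Finset.sum_congr rfl fun l _ => by rw [mul_assoc]
    rw [Finset.sum_congr rfl fun m _ => e1 m, Finset.sum_comm]
    have e2 : ∀ l, ∑ m, v l * (A l m * B m l') = v l * (if l = l' then 1 else 0) := by
      intro l; rw [← Finset.mul_sum, h1 l l']
    rw [Finset.sum_congr rfl fun l _ => e2 l]
    simp [mul_ite]
  refine card_eq_of_linearEquiv D (LinearEquiv.ofLinear φ ψ ?_ ?_)
  · apply LinearMap.ext; intro w; funext m'
    exact comp1 w m'
  · apply LinearMap.ext; intro v; funext l'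
    exact comp2 v l'

theorem card_eq_of_inv_pair_graded {Γ K : Type} [Group Γ] [Ring K] [Nontrivial K]
    (g : GradedDivRing Γ K) {I J : Type} [Fintype I] [Fintype J] [DecidableEq I]
    [DecidableEq J] (A : I → J → K) (B : J → I → K)
    (hA : ∀ l m, A l m ∈ g.component 1)
    (h1 : ∀ l l', ∑ m, A l m * B m l' = if l = l' then 1 else 0)
    (h2 : ∀ m m', ∑ l, B m l * A l m' = if m = m' then 1 else 0) :
    Fintype.card I = Fintype.card J := by
  letI : Nontrivial g.oneSubring :=
    ⟨⟨0, 1, fun h => one_ne_zero (congrArg Subtype.val h).symm⟩⟩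
  letI : DivisionRing g.oneSubring :=
    DivisionRing.ofIsUnitOrEqZero g.oneSubring_isUnit_or_eq_zero
  have h1' : ∀ l l', ∑ m, A l m * g.toRingGrading.proj (B m l') = if l = l' then 1 else 0 := by
    intro l l'
    have h := congrArg g.toRingGrading.proj (h1 l l')
    rw [map_sum] at h
    rw [Finset.sum_congr rfl fun m _ => g.toRingGrading.proj_mul_left (hA l m) (B m l')] at h
    rwa [apply_ite g.toRingGrading.proj, g.toRingGrading.proj_of_mem_one g.one_mem,
      map_zero] at h
  have h2' : ∀ m m', ∑ l, g.toRingGrading.proj (B m l) * A l m' = if m = m' then 1 else 0 := by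
    intro m m'
    have h := congrArg g.toRingGrading.proj (h2 m m')
    rw [map_sum] at h
    rw [Finset.sum_congr rfl fun l _ => g.toRingGrading.proj_mul_right (hA l m') (B m l)] at h
    rwa [apply_ite g.toRingGrading.proj, g.toRingGrading.proj_of_mem_one g.one_mem,
      map_zero] at h
  have hA1 : ∀ l m, A l m ∈ g.oneSubring := hA
  have hB1 : ∀ m l, g.toRingGrading.proj (B m l) ∈ g.oneSubring :=
    fun m l => g.toRingGrading.proj_mem (B m l)
  refine card_eq_of_inv_pair (D := g.oneSubring)
    (fun l m => ⟨A l m, hA1 l m⟩) (fun m l => ⟨g.toRingGrading.proj (B m l), hB1 m l⟩)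
    ?_ ?_
  · intro l l'
    apply Subtype.ext
    rw [AddSubmonoidClass.coe_finset_sum]
    simp only [MulMemClass.coe_mul]
    rw [h1' l l']
    by_cases h : l = l' <;> simp [h]
  · intro m m'
    apply Subtype.ext
    rw [AddSubmonoidClass.coe_finset_sum]
    simp only [MulMemClass.coe_mul]
    rw [h2' m m']
    by_cases h : m = m' <;> simp [h]

theorem card_block_eq {Γ : Type} [Group Γ] {K : Type} [Ring K] [Nontrivial K]
    (g : GradedDivRing Γ K) {n : ℕ} (γv : Fin n → Γ) (i j : Fin n)
    (U : (Matrix (Fin n) (Fin n) K)ˣ)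
    (hU : U.val ∈
      matrixComponent g.toRingGrading n γv (γv i * (γv j)⁻¹)) :
    Nat.card {l : Fin n // (γv i)⁻¹ * γv l ∈ g.toRingGrading.support} =
    Nat.card {l : Fin n // (γv j)⁻¹ * γv l ∈ g.toRingGrading.support} := by
  classical
  have key : ∀ l k : Fin n, U.val l k ≠ 0 →
      (γv l)⁻¹ * (γv i * (γv j)⁻¹) * γv k ∈ g.toRingGrading.support :=
    fun l k h => g.toRingGrading.mem_support_of_ne (hU l k) h
  have step1 : ∀ l k : Fin n, (γv i)⁻¹ * γv l ∈ g.toRingGrading.support →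
      U.val l k ≠ 0 →
      (γv j)⁻¹ * γv k ∈ g.toRingGrading.support := by
    intro l k hl hne
    have h2 := g.mul_mem_support hl (key l k hne)
    rwa [show ((γv i)⁻¹ * γv l) * ((γv l)⁻¹ * (γv i * (γv j)⁻¹) * γv k)
        = (γv j)⁻¹ * γv k by group] at h2
  have step2 : ∀ m l : Fin n, (γv j)⁻¹ * γv m ∈ g.toRingGrading.support →
      U.val l m ≠ 0 →
      (γv i)⁻¹ * γv l ∈ g.toRingGrading.support := by
    intro m l hm hne
    have h2 := g.inv_mem_support
      (g.mul_mem_support (key l m hne) (g.inv_mem_support hm))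
    rwa [show (((γv l)⁻¹ * (γv i * (γv j)⁻¹) * γv m) * ((γv j)⁻¹ * γv m)⁻¹)⁻¹
        = (γv i)⁻¹ * γv l by group] at h2
  choose cu hcu using fun l : {l : Fin n // (γv i)⁻¹ * γv l ∈ g.toRingGrading.support} =>
    g.exists_unit l.2
  have hd : ∀ m : {m : Fin n // (γv j)⁻¹ * γv m ∈ g.toRingGrading.support},
      (γv m.val)⁻¹ * γv j ∈ g.toRingGrading.support := by
    intro m
    have h := g.inv_mem_support m.2
    rwa [mul_inv_rev, inv_inv] at h
  choose du hdu using fun m => g.exists_unit (hd m)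
  rw [Nat.card_eq_fintype_card, Nat.card_eq_fintype_card]
  set V : Matrix (Fin n) (Fin n) K := (U⁻¹ : (Matrix (Fin n) (Fin n) K)ˣ).val with hV
  -- inner sums over subtypes equal full matrix products
  have hUV : ∀ (l l' : {l : Fin n // (γv i)⁻¹ * γv l ∈ g.toRingGrading.support}),
      ∑ m : {m : Fin n // (γv j)⁻¹ * γv m ∈ g.toRingGrading.support},
        U.val l.val m.val * V m.val l'.val
      = if l.val = l'.val then 1 else 0 := by
    intro l l'
    rw [sum_subtype_of_zero_off' (P := fun m : Fin n => (γv j)⁻¹ * γv m ∈ g.toRingGrading.support)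
      (fun k => U.val l.val k * V k l'.val)
      (fun k hk => by
        show U.val l.val k * V k l'.val = 0
        rcases eq_or_ne (U.val l.val k) 0 with h | h
        · rw [h, zero_mul]
        · exact absurd (step1 l.val k l.2 h) hk)]
    rw [show ∑ k, U.val l.val k * V k l'.val
        = (U.val * V) l.val l'.val
      from (Matrix.mul_apply).symm, hV, U.mul_inv, Matrix.one_apply]
  have hVU : ∀ (m m' : {m : Fin n // (γv j)⁻¹ * γv m ∈ g.toRingGrading.support}),
      ∑ l : {l : Fin n // (γv i)⁻¹ * γv l ∈ g.toRingGrading.support},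
        V m.val l.val * U.val l.val m'.val
      = if m.val = m'.val then 1 else 0 := by
    intro m m'
    rw [sum_subtype_of_zero_off' (P := fun l : Fin n => (γv i)⁻¹ * γv l ∈ g.toRingGrading.support)
      (fun k => V m.val k * U.val k m'.val)
      (fun k hk => by
        show V m.val k * U.val k m'.val = 0
        rcases eq_or_ne (U.val k m'.val) 0 with h | h
        · rw [h, mul_zero]
        · exact absurd (step2 m'.val k m'.2 h) hk)]
    rw [show ∑ k, V m.val k * U.val k m'.val
        = (V * U.val) m.val m'.val
      from (Matrix.mul_apply).symm, hV, U.inv_mul, Matrix.one_apply]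
  -- apply the abstract lemma with conjugated matrices
  refine card_eq_of_inv_pair_graded g
    (fun (l : {l : Fin n // (γv i)⁻¹ * γv l ∈ g.toRingGrading.support})
         (m : {m : Fin n // (γv j)⁻¹ * γv m ∈ g.toRingGrading.support}) =>
       (cu l : K) * U.val l.val m.val * (du m : K))
    (fun (m : {m : Fin n // (γv j)⁻¹ * γv m ∈ g.toRingGrading.support})
         (l : {l : Fin n // (γv i)⁻¹ * γv l ∈ g.toRingGrading.support}) =>
       (((du m)⁻¹ : Kˣ) : K) * V m.val l.val * (((cu l)⁻¹ : Kˣ) : K))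
    ?_ ?_ ?_
  · intro l m
    have hmem := g.mul_mem (g.mul_mem (hcu l) (hU l.val m.val)) (hdu m)
    rwa [show ((γv i)⁻¹ * γv l.val) * ((γv l.val)⁻¹ * (γv i * (γv j)⁻¹) * γv m.val)
        * ((γv m.val)⁻¹ * γv j) = 1 by group] at hmem
  · intro l l'
    have hterm : ∀ m : {m : Fin n // (γv j)⁻¹ * γv m ∈ g.toRingGrading.support}, ((cu l : K) * U.val l.val m.val * (du m : K)) *
        ((((du m)⁻¹ : Kˣ) : K) * V m.val l'.val * (((cu l')⁻¹ : Kˣ) : K))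
        = (cu l : K) * (U.val l.val m.val * V m.val l'.val) * (((cu l')⁻¹ : Kˣ) : K) := by
      intro m
      calc ((cu l : K) * U.val l.val m.val * (du m : K)) *
            ((((du m)⁻¹ : Kˣ) : K) * V m.val l'.val * (((cu l')⁻¹ : Kˣ) : K))
          = (cu l : K) * (U.val l.val m.val *
            ((du m : K) * ((((du m)⁻¹ : Kˣ) : K) * (V m.val l'.val * (((cu l')⁻¹ : Kˣ) : K))))) := by
            simp only [mul_assoc]
        _ = (cu l : K) * (U.val l.val m.val *
            (V m.val l'.val * (((cu l')⁻¹ : Kˣ) : K))) := by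
            rw [← mul_assoc (du m : K), Units.mul_inv, one_mul]
        _ = (cu l : K) * (U.val l.val m.val * V m.val l'.val) * (((cu l')⁻¹ : Kˣ) : K) := by
            simp only [mul_assoc]
    rw [Finset.sum_congr rfl fun m _ => hterm m, ← Finset.sum_mul, ← Finset.mul_sum,
      hUV l l']
    by_cases h : l = l'
    · subst h; rw [if_pos rfl, if_pos rfl, mul_one, Units.mul_inv]
    · rw [if_neg (fun hc => h (Subtype.ext hc)), if_neg h, mul_zero, zero_mul]
  · intro m m'
    have hterm : ∀ l : {l : Fin n // (γv i)⁻¹ * γv l ∈ g.toRingGrading.support},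
        ((((du m)⁻¹ : Kˣ) : K) * V m.val l.val * (((cu l)⁻¹ : Kˣ) : K)) *
        ((cu l : K) * U.val l.val m'.val * (du m' : K))
        = (((du m)⁻¹ : Kˣ) : K) * (V m.val l.val *
          U.val l.val m'.val) * (du m' : K) := by
      intro l
      calc ((((du m)⁻¹ : Kˣ) : K) * V m.val l.val * (((cu l)⁻¹ : Kˣ) : K)) *
            ((cu l : K) * U.val l.val m'.val * (du m' : K))
          = (((du m)⁻¹ : Kˣ) : K) * (V m.val l.val * ((((cu l)⁻¹ : Kˣ) : K) *
            ((cu l : K) * (U.val l.val m'.val * (du m' : K))))) := by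
            simp only [mul_assoc]
        _ = (((du m)⁻¹ : Kˣ) : K) * (V m.val l.val *
            (U.val l.val m'.val * (du m' : K))) := by
            rw [← mul_assoc (((cu l)⁻¹ : Kˣ) : K), Units.inv_mul, one_mul]
        _ = (((du m)⁻¹ : Kˣ) : K) * (V m.val l.val *
            U.val l.val m'.val) * (du m' : K) := by
            simp only [mul_assoc]
    rw [Finset.sum_congr rfl fun l _ => hterm l, ← Finset.sum_mul, ← Finset.mul_sum,
      hVU m m']
    by_cases h : m = m'
    · subst h; rw [if_pos rfl, if_pos rfl, mul_one, Units.inv_mul]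
    · rw [if_neg (fun hc => h (Subtype.ext hc)), if_neg h, mul_zero, zero_mul]

theorem rank_inj_helper {n : ℕ} (C : Finset (Fin n)) {a b : Fin n} (ha : a ∈ C) (hb : b ∈ C)
    (h : (C.filter (· < a)).card = (C.filter (· < b)).card) : a = b := by
  classical
  by_contra hne
  rcases lt_or_gt_of_ne hne with hlt | hlt
  · have hss : C.filter (· < a) ⊂ C.filter (· < b) := by
      constructor
      · intro x hx
        rw [Finset.mem_filter] at hx ⊢
        exact ⟨hx.1, hx.2.trans hlt⟩
      · intro hsup
        have h2 := hsup (Finset.mem_filter.mpr ⟨ha, hlt⟩)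
        rw [Finset.mem_filter] at h2
        exact lt_irrefl a h2.2
    exact absurd h (Nat.ne_of_lt (Finset.card_lt_card hss))
  · have hss : C.filter (· < b) ⊂ C.filter (· < a) := by
      constructor
      · intro x hx
        rw [Finset.mem_filter] at hx ⊢
        exact ⟨hx.1, hx.2.trans hlt⟩
      · intro hsup
        have h2 := hsup (Finset.mem_filter.mpr ⟨hb, hlt⟩)
        rw [Finset.mem_filter] at h2
        exact lt_irrefl b h2.2
    exact absurd h.symm (Nat.ne_of_lt (Finset.card_lt_card hss))

theorem exists_perm_blocks {n : ℕ} (r : Fin n → Fin n → Prop)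
    (hsym : ∀ l m m', r l m → r l m' → ∀ l', r l' m ↔ r l' m')
    (hcard : ∀ m,
      (Finset.univ.filter (fun l => r l m)).card =
      (Finset.univ.filter (fun m' => ∀ l, r l m ↔ r l m')).card) :
    ∃ σ : Equiv.Perm (Fin n), ∀ m, r (σ m) m := by
  classical
  have hmemcls : ∀ m : Fin n,
      m ∈ Finset.univ.filter (fun m' => ∀ l, r l m ↔ r l m') := by
    intro m; simp
  have hrank : ∀ m : Fin n,
      ((Finset.univ.filter (fun m' => ∀ l, r l m ↔ r l m')).filter (· < m)).card <
      (Finset.univ.filter (fun l => r l m)).card := by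
    intro m
    rw [hcard m]
    refine Finset.card_lt_card ⟨Finset.filter_subset _ _, fun hsub => ?_⟩
    have h2 := hsub (hmemcls m)
    rw [Finset.mem_filter] at h2
    exact lt_irrefl m h2.2
  have hlen : ∀ m : Fin n,
      ((Finset.univ.filter (fun m' => ∀ l, r l m ↔ r l m')).filter (· < m)).card <
      ((Finset.univ.filter (fun l => r l m)).sort (· ≤ ·)).length := by
    intro m; rw [Finset.length_sort]; exact hrank m
  set σ0 : Fin n → Fin n := fun m =>
    ((Finset.univ.filter (fun l => r l m)).sort (· ≤ ·)).get
      ⟨((Finset.univ.filter (fun m' => ∀ l, r l m ↔ r l m')).filter (· < m)).card, hlen m⟩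
    with hσ0
  have hr : ∀ m, r (σ0 m) m := by
    intro m
    have hmem : σ0 m ∈ Finset.univ.filter (fun l => r l m) := by
      rw [← Finset.mem_sort (α := Fin n) (· ≤ ·)]
      exact List.get_mem _ _
    rw [Finset.mem_filter] at hmem
    exact hmem.2
  have hinj : Function.Injective σ0 := by
    intro m m' heq
    have h1 : r (σ0 m) m := hr m
    have h2 : r (σ0 m) m' := heq ▸ hr m'
    have hiff := hsym (σ0 m) m m' h1 h2
    have hTeq : Finset.univ.filter (fun l => r l m) = Finset.univ.filter (fun l => r l m') := by
      ext l
      simp only [Finset.mem_filter, Finset.mem_univ, true_and]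
      exact hiff l
    have hclseq : Finset.univ.filter (fun m'' => ∀ l, r l m ↔ r l m'')
        = Finset.univ.filter (fun m'' => ∀ l, r l m' ↔ r l m'') := by
      ext m''
      simp only [Finset.mem_filter, Finset.mem_univ, true_and]
      exact ⟨fun hm l => (hiff l).symm.trans (hm l), fun hm l => (hiff l).trans (hm l)⟩
    have hLeq : ((Finset.univ.filter (fun l => r l m)).sort (· ≤ ·))
        = ((Finset.univ.filter (fun l => r l m')).sort (· ≤ ·)) := by rw [hTeq]
    have h3 : ((Finset.univ.filter (fun l => r l m)).sort (· ≤ ·)).get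
        ⟨((Finset.univ.filter (fun m'' => ∀ l, r l m ↔ r l m'')).filter (· < m)).card, hlen m⟩
        = ((Finset.univ.filter (fun l => r l m)).sort (· ≤ ·)).get
        ⟨((Finset.univ.filter (fun m'' => ∀ l, r l m' ↔ r l m'')).filter (· < m')).card,
          by rw [hLeq]; exact hlen m'⟩ := by
      calc _ = σ0 m := rfl
        _ = σ0 m' := heq
        _ = ((Finset.univ.filter (fun l => r l m')).sort (· ≤ ·)).get
            ⟨((Finset.univ.filter (fun m'' => ∀ l, r l m' ↔ r l m'')).filter (· < m')).card,
              hlen m'⟩ := rfl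
        _ = _ := List.get_of_eq hLeq.symm _
    have h4 := (List.nodup_iff_injective_get.mp (Finset.sort_nodup _ _)) h3
    have h5 : ((Finset.univ.filter (fun m'' => ∀ l, r l m ↔ r l m'')).filter (· < m)).card
        = ((Finset.univ.filter (fun m'' => ∀ l, r l m ↔ r l m'')).filter (· < m')).card := by
      have := congrArg Fin.val h4
      simpa [hclseq] using this
    exact rank_inj_helper _ (hmemcls m) (hclseq ▸ hmemcls m') h5
  have hbij := Finite.injective_iff_bijective.mp hinj
  exact ⟨Equiv.ofBijective σ0 hbij, fun m => by
    have : (Equiv.ofBijective σ0 hbij) m = σ0 m := rfl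
    rw [this]; exact hr m⟩

theorem crossed_component_of_perm {Γ : Type} [Group Γ] {K : Type} [Ring K] [Nontrivial K]
    (g : GradedDivRing Γ K) {n : ℕ} (γv : Fin n → Γ) (δ : Γ) (σ : Equiv.Perm (Fin n))
    (hu : ∀ m, (γv (σ m))⁻¹ * δ * γv m ∈ g.toRingGrading.support) :
    ∃ u : (Matrix (Fin n) (Fin n) K)ˣ,
      u.val ∈ matrixComponent g.toRingGrading n γv δ := by
  classical
  choose w hw using fun m => g.exists_unit (hu m)
  refine ⟨⟨Matrix.of fun l m => if l = σ m then (w m : K) else 0,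
           Matrix.of fun m l => if l = σ m then (((w m)⁻¹ : Kˣ) : K) else 0, ?_, ?_⟩, ?_⟩
  · ext l k
    rw [Matrix.mul_apply]
    rw [Finset.sum_eq_single (σ.symm l)]
    · simp only [Matrix.of_apply, Equiv.apply_symm_apply, if_true]
      by_cases h : k = l
      · subst h; rw [if_pos rfl, Units.mul_inv, Matrix.one_apply_eq]
      · rw [if_neg h, mul_zero, Matrix.one_apply_ne' h]
    · intro t _ ht
      simp only [Matrix.of_apply]
      rw [if_neg (fun hl : l = σ t => ht ((Equiv.eq_symm_apply σ).mpr hl.symm)), zero_mul]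
    · intro hmem; exact absurd (Finset.mem_univ _) hmem
  · ext m k
    rw [Matrix.mul_apply, Finset.sum_eq_single (σ m)]
    · simp only [Matrix.of_apply, if_true]
      by_cases h : m = k
      · subst h; rw [if_pos rfl, Units.inv_mul, Matrix.one_apply_eq]
      · rw [if_neg (fun hh : σ m = σ k => h (σ.injective hh)), mul_zero,
          Matrix.one_apply_ne h]
    · intro t _ ht
      simp only [Matrix.of_apply]
      rw [if_neg (fun hh : t = σ m => ht hh), zero_mul]
    · intro hmem; exact absurd (Finset.mem_univ _) hmem
  · intro l m
    simp only [Matrix.of_apply]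
    by_cases h : l = σ m
    · subst h; rw [if_pos rfl]; exact hw m
    · rw [if_neg h]; exact zero_mem _

theorem ncard_setOf_eq_filter {n : ℕ} (P : Fin n → Prop) [DecidablePred P] :
    {l : Fin n | P l}.ncard = (Finset.univ.filter P).card := by
  rw [ncard_eq_card_subtype, Fintype.card_subtype]
  simp [Set.mem_setOf_eq]

end Aux

/-- For a `Γ`-graded division ring `K` with support `Γ_K` and
`R = Mₙ(K)(γ₁, …, γₙ)`, the ring `R` is a crossed product iff the cosets
`γ₁Γ_K, …, γₙΓ_K` exhaust `Γ/Γ_K` and every coset occurs the same number of times in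
this list (note `γ_lΓ_K = γᵢΓ_K ↔ γᵢ⁻¹γ_l ∈ Γ_K`). -/
theorem matrix_crossedProduct_iff_cosets_and_multiplicities {Γ : Type} [Group Γ]
    {K : Type} [Ring K] [Nontrivial K] (g : GradedDivRing Γ K) {n : ℕ} (hn : 0 < n)
    (γv : Fin n → Γ) :
    IsCrossedProduct (matrixComponent g.toRingGrading n γv) ↔
      ((∀ δ : Γ, ∃ i : Fin n, (γv i)⁻¹ * δ ∈ g.toRingGrading.support) ∧
        ∀ i j : Fin n,
          {l : Fin n | (γv i)⁻¹ * γv l ∈ g.toRingGrading.support}.ncard =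
          {l : Fin n | (γv j)⁻¹ * γv l ∈ g.toRingGrading.support}.ncard) := by
  classical
  constructor
  · intro h
    constructor
    · intro δ
      obtain ⟨U, hU⟩ := h (δ * (γv ⟨0, hn⟩)⁻¹)
      have hcol : ∃ i : Fin n, U.val i ⟨0, hn⟩ ≠ 0 := by
        by_contra hc
        push_neg at hc
        have h1 : ((U⁻¹ : (Matrix (Fin n) (Fin n) K)ˣ).val * U.val) ⟨0, hn⟩ ⟨0, hn⟩
            = (1 : Matrix (Fin n) (Fin n) K) ⟨0, hn⟩ ⟨0, hn⟩ := by rw [U.inv_mul]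
        rw [Matrix.mul_apply, Matrix.one_apply_eq] at h1
        rw [Finset.sum_eq_zero (fun t _ => by rw [hc t, mul_zero])] at h1
        exact one_ne_zero (α := K) h1.symm
      obtain ⟨i, hi⟩ := hcol
      refine ⟨i, ?_⟩
      have hmem := g.toRingGrading.mem_support_of_ne (hU i ⟨0, hn⟩) hi
      rwa [show (γv i)⁻¹ * (δ * (γv ⟨0, hn⟩)⁻¹) * γv ⟨0, hn⟩ = (γv i)⁻¹ * δ by group] at hmem
    · intro i j
      obtain ⟨U, hU⟩ := h (γv i * (γv j)⁻¹)
      have hcb := card_block_eq g γv i j U hU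
      rw [← Nat.card_coe_set_eq, ← Nat.card_coe_set_eq]
      exact hcb
  · rintro ⟨ha, hb⟩ δ
    have hne : ∀ m : Fin n, ∃ i, (γv i)⁻¹ * δ * γv m ∈ g.toRingGrading.support := by
      intro m
      obtain ⟨i, hi⟩ := ha (δ * γv m)
      exact ⟨i, by rwa [← mul_assoc] at hi⟩
    have hsym : ∀ l m m', ((γv l)⁻¹ * δ * γv m ∈ g.toRingGrading.support) →
        ((γv l)⁻¹ * δ * γv m' ∈ g.toRingGrading.support) →
        ∀ l', ((γv l')⁻¹ * δ * γv m ∈ g.toRingGrading.support) ↔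
          ((γv l')⁻¹ * δ * γv m' ∈ g.toRingGrading.support) := by
      intro l m m' h1 h2 l'
      have hmm' : (γv m)⁻¹ * γv m' ∈ g.toRingGrading.support := by
        have h3 := g.mul_mem_support (g.inv_mem_support h1) h2
        rwa [show ((γv l)⁻¹ * δ * γv m)⁻¹ * ((γv l)⁻¹ * δ * γv m')
            = (γv m)⁻¹ * γv m' by group] at h3
      constructor
      · intro hl'
        have h3 := g.mul_mem_support hl' hmm'
        rwa [show ((γv l')⁻¹ * δ * γv m) * ((γv m)⁻¹ * γv m')
            = (γv l')⁻¹ * δ * γv m' by group] at h3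
      · intro hl'
        have h3 := g.mul_mem_support hl' (g.inv_mem_support hmm')
        rwa [show ((γv l')⁻¹ * δ * γv m') * ((γv m)⁻¹ * γv m')⁻¹
            = (γv l')⁻¹ * δ * γv m by group] at h3
    have hcard : ∀ m : Fin n,
        (Finset.univ.filter (fun l => (γv l)⁻¹ * δ * γv m ∈ g.toRingGrading.support)).card =
        (Finset.univ.filter (fun m' => ∀ l, ((γv l)⁻¹ * δ * γv m ∈ g.toRingGrading.support) ↔
          ((γv l)⁻¹ * δ * γv m' ∈ g.toRingGrading.support))).card := by
      intro m
      obtain ⟨i0, hi0⟩ := hne m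
      have hT : Finset.univ.filter (fun l => (γv l)⁻¹ * δ * γv m ∈ g.toRingGrading.support)
          = Finset.univ.filter (fun l => (γv i0)⁻¹ * γv l ∈ g.toRingGrading.support) := by
        ext l
        simp only [Finset.mem_filter, Finset.mem_univ, true_and]
        constructor
        · intro hl
          have h3 := g.mul_mem_support hi0 (g.inv_mem_support hl)
          rwa [show ((γv i0)⁻¹ * δ * γv m) * ((γv l)⁻¹ * δ * γv m)⁻¹
              = (γv i0)⁻¹ * γv l by group] at h3
        · intro hl
          have h3 := g.mul_mem_support (g.inv_mem_support hl) hi0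
          rwa [show ((γv i0)⁻¹ * γv l)⁻¹ * ((γv i0)⁻¹ * δ * γv m)
              = (γv l)⁻¹ * δ * γv m by group] at h3
      have hcls : Finset.univ.filter (fun m' => ∀ l, ((γv l)⁻¹ * δ * γv m ∈ g.toRingGrading.support) ↔
            ((γv l)⁻¹ * δ * γv m' ∈ g.toRingGrading.support))
          = Finset.univ.filter (fun m' => (γv m)⁻¹ * γv m' ∈ g.toRingGrading.support) := by
        ext m'
        simp only [Finset.mem_filter, Finset.mem_univ, true_and]
        constructor
        · intro hm'
          have h2 := (hm' i0).mp hi0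
          have h3 := g.mul_mem_support (g.inv_mem_support hi0) h2
          rwa [show ((γv i0)⁻¹ * δ * γv m)⁻¹ * ((γv i0)⁻¹ * δ * γv m')
              = (γv m)⁻¹ * γv m' by group] at h3
        · intro hm' l
          constructor
          · intro hl
            have h3 := g.mul_mem_support hl hm'
            rwa [show ((γv l)⁻¹ * δ * γv m) * ((γv m)⁻¹ * γv m')
                = (γv l)⁻¹ * δ * γv m' by group] at h3
          · intro hl
            have h3 := g.mul_mem_support hl (g.inv_mem_support hm')
            rwa [show ((γv l)⁻¹ * δ * γv m') * ((γv m)⁻¹ * γv m')⁻¹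
                = (γv l)⁻¹ * δ * γv m by group] at h3
      rw [hT, hcls]
      have h4 := hb i0 m
      rwa [ncard_setOf_eq_filter, ncard_setOf_eq_filter] at h4
    obtain ⟨σ, hσ⟩ := exists_perm_blocks
      (fun l m => (γv l)⁻¹ * δ * γv m ∈ g.toRingGrading.support) hsym hcard
    obtain ⟨u, hu⟩ := crossed_component_of_perm g γv δ σ hσ
    exact ⟨u, hu⟩
end

section
/- Let K be a field, m and n positive integers, and γ₁,…,γₙ integers. Then the ℤ-graded ring R = Mₙ(K[x^m, x^{−m}])(γ₁,…,γₙ) is a group ring over its degree-zero component if and only if m = 1; and in that case R is graded isomorphic to Mₙ(K[x, x^{−1}])(0, 0, …, 0). -/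
open Pointwise

noncomputable section

def matrixComponentZ {R : Type} [Ring R] (c : ℤ → AddSubgroup R) (n : ℕ)
    (γv : Fin n → ℤ) (δ : ℤ) : AddSubgroup (Matrix (Fin n) (Fin n) R) where
  carrier := {M | ∀ i j, M i j ∈ c (-(γv i) + δ + γv j)}
  add_mem' := by
    intro a b ha hb i j
    simpa [Matrix.add_apply] using add_mem (ha i j) (hb i j)
  zero_mem' := by
    intro i j
    simpa using zero_mem (c (-(γv i) + δ + γv j))
  neg_mem' := by
    intro a ha i j
    simpa [Matrix.neg_apply] using neg_mem (ha i j)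

/-- The graded field `K[x^m, x^{-m}]`, realized as the Laurent polynomial ring
`AddMonoidAlgebra K ℤ` in which the basis element `single k` stands for `x^{m k}`.
Its degree-`d` component is `K·x^d` if `m ∣ d` (i.e. `d = m k`) and `0` otherwise. -/
def laurentComponent (K : Type) [Field K] (m : ℕ) (d : ℤ) :
    AddSubgroup (AddMonoidAlgebra K ℤ) where
  carrier := {f | ∀ k : ℤ, (m : ℤ) * k ≠ d → f.coeff k = 0}
  add_mem' := by
    intro f h hf hh k hk
    show (f + h).coeff k = 0
    rw [AddMonoidAlgebra.coeff_add, Finsupp.add_apply, hf k hk, hh k hk, add_zero]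
  zero_mem' := fun k _ => rfl
  neg_mem' := by
    intro f hf k hk
    show (-f).coeff k = 0
    rw [AddMonoidAlgebra.coeff_neg, Finsupp.neg_apply, hf k hk, neg_zero]

theorem laurentComponent_mul {K : Type} [Field K] {m : ℕ} {a b : ℤ}
    {f g : AddMonoidAlgebra K ℤ} (hf : f ∈ laurentComponent K m a)
    (hg : g ∈ laurentComponent K m b) : f * g ∈ laurentComponent K m (a + b) := by
  intro k hk
  by_contra hne
  have hks : k ∈ (f * g).coeff.support := Finsupp.mem_support_iff.mpr hne
  have hmem := AddMonoidAlgebra.support_coeff_mul_subset f g hks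
  rw [Finset.mem_add] at hmem
  obtain ⟨k₁, hk₁, k₂, hk₂, hsum⟩ := hmem
  have h1 : (m : ℤ) * k₁ = a := by
    by_contra h
    exact (Finsupp.mem_support_iff.mp hk₁) (hf k₁ h)
  have h2 : (m : ℤ) * k₂ = b := by
    by_contra h
    exact (Finsupp.mem_support_iff.mp hk₂) (hg k₂ h)
  exact hk (by rw [← hsum, mul_add, h1, h2])

def StronglyGradedZ {S : Type} [Ring S] (c : ℤ → AddSubgroup S) : Prop :=
  ∀ a b : ℤ, c (a + b) ≤ AddSubgroup.closure ((c a : Set S) * (c b : Set S))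

def IsCrossedProductZ {S : Type} [Ring S] (c : ℤ → AddSubgroup S) : Prop :=
  ∀ d : ℤ, ∃ u : Sˣ, (u : S) ∈ c d

def IsSkewGroupRingZ {S : Type} [Ring S] (c : ℤ → AddSubgroup S) : Prop :=
  ∃ σ : ℤ → Sˣ, (∀ a b : ℤ, σ (a + b) = σ a * σ b) ∧ ∀ d : ℤ, ((σ d : Sˣ) : S) ∈ c d

/-- The degree-zero component of `Mₙ(K[x^m, x^{-m}])(γ₁, …, γₙ)`, as a subring. -/
def laurentMatrixZeroSubring (K : Type) [Field K] (m n : ℕ) (γv : Fin n → ℤ) :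
    Subring (Matrix (Fin n) (Fin n) (AddMonoidAlgebra K ℤ)) where
  carrier := matrixComponentZ (laurentComponent K m) n γv 0
  add_mem' := add_mem
  zero_mem' := zero_mem _
  neg_mem' := neg_mem
  one_mem' := by
    intro i j
    by_cases h : i = j
    · subst h
      rw [Matrix.one_apply_eq]
      have hh : -(γv i) + 0 + γv i = 0 := by ring
      rw [hh]
      intro k hk
      have hk0 : k ≠ 0 := by
        intro h0; exact hk (by rw [h0, mul_zero])
      show ((AddMonoidAlgebra.single (0 : ℤ) (1 : K))).coeff k = 0
      first
        | exact Finsupp.single_eq_of_ne (Ne.symm hk0)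
        | exact Finsupp.single_eq_of_ne hk0
    · rw [Matrix.one_apply_ne h]
      exact zero_mem _
  mul_mem' := by
    intro a b ha hb i j
    show (a * b) i j ∈ _
    rw [Matrix.mul_apply]
    refine AddSubgroup.sum_mem _ fun k _ => ?_
    have h := laurentComponent_mul (ha i k) (hb k j)
    have hh : -(γv i) + 0 + γv k + (-(γv k) + 0 + γv j) = -(γv i) + 0 + γv j := by ring
    rwa [hh] at h

/-- The degree-`d` component `A·d` of the group ring `A[ℤ]`. -/
def addMonoidAlgebraComponentZ (A : Type) [Ring A] (d : ℤ) :
    AddSubgroup (AddMonoidAlgebra A ℤ) where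
  carrier := {f | ∀ k : ℤ, k ≠ d → f.coeff k = 0}
  add_mem' := by
    intro f h hf hh k hk
    show (f + h).coeff k = 0
    rw [AddMonoidAlgebra.coeff_add, Finsupp.add_apply, hf k hk, hh k hk, add_zero]
  zero_mem' := fun k _ => rfl
  neg_mem' := by
    intro f hf k hk
    show (-f).coeff k = 0
    rw [AddMonoidAlgebra.coeff_neg, Finsupp.neg_apply, hf k hk, neg_zero]

section AuxLemmas

variable {K : Type} [Field K]

lemma auxSingleMemL1 (d : ℤ) (c : K) :
    AddMonoidAlgebra.single d c ∈ laurentComponent K 1 d := by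
  intro k hk
  exact Finsupp.single_eq_of_ne' (fun h => hk (by simp [h]))

lemma auxEqSingleL1 {d : ℤ} {f : AddMonoidAlgebra K ℤ} (hf : f ∈ laurentComponent K 1 d) :
    f = AddMonoidAlgebra.single d (f.coeff d) := by
  ext k
  by_cases h : k = d
  · subst h; rw [AddMonoidAlgebra.coeff_single, Finsupp.single_eq_same]
  · rw [hf k (by simpa using h), AddMonoidAlgebra.coeff_single, Finsupp.single_eq_of_ne' (Ne.symm h)]

lemma auxShiftMem {t s d e : ℤ} {x : AddMonoidAlgebra K ℤ} (hx : x ∈ laurentComponent K 1 d)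
    (he : t + d + s = e) :
    AddMonoidAlgebra.single t (1:K) * x * AddMonoidAlgebra.single s 1 ∈
      laurentComponent K 1 e := by
  subst he
  exact laurentComponent_mul (laurentComponent_mul (auxSingleMemL1 t 1) hx) (auxSingleMemL1 s 1)

lemma auxConjCancel {t t' s s' : ℤ} (ht : t + t' = 0) (hs : s' + s = 0)
    (x : AddMonoidAlgebra K ℤ) :
    AddMonoidAlgebra.single t (1:K) *
        (AddMonoidAlgebra.single t' (1:K) * x * AddMonoidAlgebra.single s' (1:K)) *
      AddMonoidAlgebra.single s (1:K) = x := by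
  have h1 : AddMonoidAlgebra.single t (1:K) * AddMonoidAlgebra.single t' (1:K) = 1 := by
    rw [AddMonoidAlgebra.single_mul_single, one_mul, ht, ← AddMonoidAlgebra.one_def]
  have h2 : AddMonoidAlgebra.single s' (1:K) * AddMonoidAlgebra.single s (1:K) = 1 := by
    rw [AddMonoidAlgebra.single_mul_single, one_mul, hs, ← AddMonoidAlgebra.one_def]
  calc AddMonoidAlgebra.single t (1:K) *
        (AddMonoidAlgebra.single t' (1:K) * x * AddMonoidAlgebra.single s' (1:K)) *
      AddMonoidAlgebra.single s (1:K)
      = (AddMonoidAlgebra.single t (1:K) * AddMonoidAlgebra.single t' (1:K)) * x *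
        (AddMonoidAlgebra.single s' (1:K) * AddMonoidAlgebra.single s (1:K)) := by
        simp only [mul_assoc]
    _ = x := by rw [h1, h2, one_mul, mul_one]

lemma auxUnshiftMem {t s d e : ℤ} {x : AddMonoidAlgebra K ℤ}
    (h : AddMonoidAlgebra.single t (1:K) * x * AddMonoidAlgebra.single s 1 ∈
      laurentComponent K 1 d)
    (he : -t + d + -s = e) : x ∈ laurentComponent K 1 e := by
  have h2 := auxShiftMem h he
  rwa [auxConjCancel (by ring) (by ring)] at h2

lemma auxSingleMemC {A : Type} [Ring A] (d : ℤ) (a : A) :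
    AddMonoidAlgebra.single d a ∈ addMonoidAlgebraComponentZ A d :=
  fun _ hk => Finsupp.single_eq_of_ne' (Ne.symm hk)

lemma auxEqSingleC {A : Type} [Ring A] {d : ℤ} {f : AddMonoidAlgebra A ℤ}
    (hf : f ∈ addMonoidAlgebraComponentZ A d) : f = AddMonoidAlgebra.single d (f.coeff d) := by
  ext k
  by_cases h : k = d
  · subst h; rw [AddMonoidAlgebra.coeff_single, Finsupp.single_eq_same]
  · rw [hf k h, AddMonoidAlgebra.coeff_single, Finsupp.single_eq_of_ne' (Ne.symm h)]

end AuxLemmas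

section AuxConj

variable (K : Type) [Field K] (n : ℕ) (γv : Fin n → ℤ)

def auxConj : Matrix (Fin n) (Fin n) (AddMonoidAlgebra K ℤ) ≃+*
    Matrix (Fin n) (Fin n) (AddMonoidAlgebra K ℤ) where
  toFun a := fun i j =>
    AddMonoidAlgebra.single (γv i) (1:K) * a i j * AddMonoidAlgebra.single (-(γv j)) 1
  invFun a := fun i j =>
    AddMonoidAlgebra.single (-(γv i)) (1:K) * a i j * AddMonoidAlgebra.single (γv j) 1
  left_inv a := by
    funext i j
    exact auxConjCancel (by ring) (by ring) (a i j)
  right_inv a := by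
    funext i j
    exact auxConjCancel (by ring) (by ring) (a i j)
  map_add' a b := by
    funext i j
    show AddMonoidAlgebra.single (γv i) (1:K) * (a + b) i j *
        AddMonoidAlgebra.single (-(γv j)) 1 = _
    rw [Matrix.add_apply, mul_add, add_mul]
    rfl
  map_mul' a b := by
    funext i j
    show AddMonoidAlgebra.single (γv i) (1:K) * (a * b) i j *
        AddMonoidAlgebra.single (-(γv j)) 1 = _
    simp only [Matrix.mul_apply]
    rw [Finset.mul_sum, Finset.sum_mul]
    refine Finset.sum_congr rfl fun k _ => ?_
    have h2 : AddMonoidAlgebra.single (-(γv k)) (1:K) * AddMonoidAlgebra.single (γv k) 1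
        = 1 := by
      rw [AddMonoidAlgebra.single_mul_single, one_mul, neg_add_cancel,
        ← AddMonoidAlgebra.one_def]
    calc AddMonoidAlgebra.single (γv i) (1:K) * (a i k * b k j) *
          AddMonoidAlgebra.single (-(γv j)) 1
        = AddMonoidAlgebra.single (γv i) (1:K) * a i k *
            (AddMonoidAlgebra.single (-(γv k)) (1:K) * AddMonoidAlgebra.single (γv k) 1) *
            b k j * AddMonoidAlgebra.single (-(γv j)) 1 := by
          rw [h2, mul_one]; simp only [mul_assoc]
      _ = (AddMonoidAlgebra.single (γv i) (1:K) * a i k *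
            AddMonoidAlgebra.single (-(γv k)) 1) *
          (AddMonoidAlgebra.single (γv k) (1:K) * b k j *
            AddMonoidAlgebra.single (-(γv j)) 1) := by simp only [mul_assoc]

lemma auxConjGraded (δ : ℤ) (a : Matrix (Fin n) (Fin n) (AddMonoidAlgebra K ℤ)) :
    a ∈ matrixComponentZ (laurentComponent K 1) n γv δ ↔
      auxConj K n γv a ∈ matrixComponentZ (laurentComponent K 1) n (fun _ => (0:ℤ)) δ := by
  constructor
  · intro h i j
    show AddMonoidAlgebra.single (γv i) (1:K) * a i j *
        AddMonoidAlgebra.single (-(γv j)) 1 ∈ _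
    exact auxShiftMem (h i j) (by ring)
  · intro h i j
    have h2 := h i j
    have h3 : AddMonoidAlgebra.single (γv i) (1:K) * a i j *
        AddMonoidAlgebra.single (-(γv j)) 1 ∈ laurentComponent K 1 (-0 + δ + 0) := h2
    exact auxUnshiftMem h3 (by ring)

end AuxConj

section AuxGroupRing

variable (K : Type) [Field K] (n : ℕ) (γv : Fin n → ℤ)

abbrev auxR0 := laurentMatrixZeroSubring K 1 n γv

def auxG : Multiplicative ℤ →* Matrix (Fin n) (Fin n) (AddMonoidAlgebra K ℤ) where
  toFun z := Matrix.diagonal (fun _ => AddMonoidAlgebra.single (Multiplicative.toAdd z) (1:K))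
  map_one' := by
    show Matrix.diagonal _ = 1
    simp only [show Multiplicative.toAdd (1 : Multiplicative ℤ) = 0 from rfl,
      show AddMonoidAlgebra.single (0:ℤ) (1:K) = 1 from (AddMonoidAlgebra.one_def).symm]
    exact Matrix.diagonal_one
  map_mul' x y := by
    rw [Matrix.diagonal_mul_diagonal]
    funext i j
    rw [AddMonoidAlgebra.single_mul_single, one_mul]
    rfl

lemma auxGcomm (x : auxR0 K n γv) (y : Multiplicative ℤ) :
    Commute ((auxR0 K n γv).subtype x) (auxG K n y) := by
  show _ * _ = _ * _
  funext i j
  show ((auxR0 K n γv).subtype x *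
      Matrix.diagonal (fun _ => AddMonoidAlgebra.single (Multiplicative.toAdd y) (1:K)) :
      Matrix (Fin n) (Fin n) (AddMonoidAlgebra K ℤ)) i j =
    ((Matrix.diagonal (fun _ => AddMonoidAlgebra.single (Multiplicative.toAdd y) (1:K)) *
      (auxR0 K n γv).subtype x : Matrix (Fin n) (Fin n) (AddMonoidAlgebra K ℤ))) i j
  rw [Matrix.mul_diagonal, Matrix.diagonal_mul, mul_comm]

def auxPhi : AddMonoidAlgebra (auxR0 K n γv) ℤ →+*
    Matrix (Fin n) (Fin n) (AddMonoidAlgebra K ℤ) :=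
  AddMonoidAlgebra.liftNCRingHom ((auxR0 K n γv).subtype) (auxG K n) (auxGcomm K n γv)

lemma auxPhi_single (δ : ℤ) (a : auxR0 K n γv) :
    auxPhi K n γv (AddMonoidAlgebra.single δ a) =
      (a : Matrix (Fin n) (Fin n) (AddMonoidAlgebra K ℤ)) *
        Matrix.diagonal (fun _ => AddMonoidAlgebra.single δ (1:K)) := by
  show AddMonoidAlgebra.liftNC _ _ _ = _
  rw [AddMonoidAlgebra.liftNC_single]
  rfl

lemma auxMemR0entry (aR : auxR0 K n γv) (i j : Fin n) :
    (aR : Matrix (Fin n) (Fin n) (AddMonoidAlgebra K ℤ)) i j ∈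
      laurentComponent K 1 (γv j - γv i) := by
  have h : ∀ i j : Fin n, (aR : Matrix (Fin n) (Fin n) (AddMonoidAlgebra K ℤ)) i j ∈
      laurentComponent K 1 (-(γv i) + 0 + γv j) := aR.2
  have h2 := h i j
  rwa [show -(γv i) + 0 + γv j = γv j - γv i from by ring] at h2

lemma auxPhi_apply_coeff (F : AddMonoidAlgebra (auxR0 K n γv) ℤ) (i j : Fin n) (δ₀ : ℤ) :
    (auxPhi K n γv F i j).coeff (γv j - γv i + δ₀) =
      ((F.coeff δ₀ : Matrix (Fin n) (Fin n) (AddMonoidAlgebra K ℤ)) i j).coeff (γv j - γv i) := by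
  have hF : auxPhi K n γv F = ∑ δ ∈ F.coeff.support,
      ((F.coeff δ : Matrix (Fin n) (Fin n) (AddMonoidAlgebra K ℤ)) *
        Matrix.diagonal (fun _ => AddMonoidAlgebra.single δ (1:K))) := by
    conv_lhs => rw [← AddMonoidAlgebra.sum_coeff_single F, Finsupp.sum, map_sum]
    exact Finset.sum_congr rfl fun δ _ => auxPhi_single K n γv δ (F.coeff δ)
  rw [hF, Matrix.sum_apply, AddMonoidAlgebra.coeff_sum, Finsupp.coe_finset_sum, Finset.sum_apply]
  have hterm : ∀ δ : ℤ, ((((F.coeff δ : Matrix (Fin n) (Fin n) (AddMonoidAlgebra K ℤ)) *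
      Matrix.diagonal (fun _ => AddMonoidAlgebra.single δ (1:K)) :
      Matrix (Fin n) (Fin n) (AddMonoidAlgebra K ℤ))) i j).coeff (γv j - γv i + δ₀) =
      if δ = δ₀ then ((F.coeff δ₀ : Matrix (Fin n) (Fin n) (AddMonoidAlgebra K ℤ)) i j).coeff
        (γv j - γv i) else 0 := by
    intro δ
    rw [Matrix.mul_diagonal]
    conv_lhs => rw [auxEqSingleL1 (auxMemR0entry K n γv (F.coeff δ) i j)]
    rw [AddMonoidAlgebra.single_mul_single, mul_one, AddMonoidAlgebra.coeff_single, Finsupp.single_apply]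
    by_cases hδ : δ = δ₀
    · subst hδ
      rw [if_pos rfl, if_pos rfl]
    · rw [if_neg (by omega), if_neg hδ]
  rw [Finset.sum_congr rfl fun δ _ => hterm δ, Finset.sum_ite_eq' F.coeff.support δ₀]
  by_cases hδ₀ : δ₀ ∈ F.coeff.support
  · rw [if_pos hδ₀]
  · rw [if_neg hδ₀, Finsupp.notMem_support_iff.mp hδ₀]
    show (0:ℤ →₀ K) (γv j - γv i) = 0
    rfl

def auxPsiFun (a : Matrix (Fin n) (Fin n) (AddMonoidAlgebra K ℤ)) (δ : ℤ) : auxR0 K n γv :=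
  ⟨fun i j => AddMonoidAlgebra.single (γv j - γv i) ((a i j).coeff (γv j - γv i + δ)), by
    intro i j
    show AddMonoidAlgebra.single (γv j - γv i) ((a i j).coeff (γv j - γv i + δ)) ∈
      laurentComponent K 1 (-(γv i) + 0 + γv j)
    rw [show -(γv i) + 0 + γv j = γv j - γv i from by ring]
    exact auxSingleMemL1 _ _⟩

def auxPsi (a : Matrix (Fin n) (Fin n) (AddMonoidAlgebra K ℤ)) :
    AddMonoidAlgebra (auxR0 K n γv) ℤ :=
  AddMonoidAlgebra.ofCoeff <| Finsupp.onFinset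
    (Finset.univ.biUnion fun i : Fin n => Finset.univ.biUnion fun j : Fin n =>
      (a i j).coeff.support.image fun p => p - (γv j - γv i))
    (auxPsiFun K n γv a)
    (by
      intro δ hδ
      by_contra hc
      simp only [Finset.mem_biUnion, Finset.mem_univ, true_and, Finset.mem_image,
        Finsupp.mem_support_iff, not_exists, not_and] at hc
      apply hδ
      apply Subtype.ext
      funext i j
      show AddMonoidAlgebra.single (γv j - γv i) ((a i j).coeff (γv j - γv i + δ)) = 0
      have h0 : (a i j).coeff (γv j - γv i + δ) = 0 := by
        by_contra h1
        exact hc i j _ h1 (by ring)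
      rw [h0]
      exact AddMonoidAlgebra.single_zero _)

lemma auxPhiPsi (a : Matrix (Fin n) (Fin n) (AddMonoidAlgebra K ℤ)) :
    auxPhi K n γv (auxPsi K n γv a) = a := by
  funext i j
  apply AddMonoidAlgebra.ext
  apply Finsupp.ext
  intro p
  have h := auxPhi_apply_coeff K n γv (auxPsi K n γv a) i j (p - (γv j - γv i))
  rw [show γv j - γv i + (p - (γv j - γv i)) = p from by ring] at h
  rw [h]
  show (AddMonoidAlgebra.single (γv j - γv i)
      ((a i j).coeff (γv j - γv i + (p - (γv j - γv i))))).coeff (γv j - γv i) = (a i j).coeff p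
  rw [AddMonoidAlgebra.coeff_single, Finsupp.single_eq_same, show γv j - γv i + (p - (γv j - γv i)) = p from by ring]

lemma auxPsiPhi (F : AddMonoidAlgebra (auxR0 K n γv) ℤ) :
    auxPsi K n γv (auxPhi K n γv F) = F := by
  apply AddMonoidAlgebra.ext
  apply Finsupp.ext
  intro δ
  apply Subtype.ext
  funext i j
  show AddMonoidAlgebra.single (γv j - γv i)
      (((auxPhi K n γv F) i j).coeff (γv j - γv i + δ)) =
    (F.coeff δ : Matrix (Fin n) (Fin n) (AddMonoidAlgebra K ℤ)) i j
  rw [auxPhi_apply_coeff]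
  exact (auxEqSingleL1 (auxMemR0entry K n γv (F.coeff δ) i j)).symm

def auxE : AddMonoidAlgebra (auxR0 K n γv) ℤ ≃+*
    Matrix (Fin n) (Fin n) (AddMonoidAlgebra K ℤ) :=
  { toFun := auxPhi K n γv
    invFun := auxPsi K n γv
    left_inv := auxPsiPhi K n γv
    right_inv := auxPhiPsi K n γv
    map_mul' := (auxPhi K n γv).map_mul
    map_add' := (auxPhi K n γv).map_add }

lemma auxPhiGraded (δ : ℤ) (F : AddMonoidAlgebra (auxR0 K n γv) ℤ) :
    auxPhi K n γv F ∈ matrixComponentZ (laurentComponent K 1) n γv δ ↔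
      F ∈ addMonoidAlgebraComponentZ (auxR0 K n γv) δ := by
  constructor
  · intro h k hk
    apply Subtype.ext
    funext i j
    show (F.coeff k : Matrix (Fin n) (Fin n) (AddMonoidAlgebra K ℤ)) i j = 0
    have h2 : ((F.coeff k : Matrix (Fin n) (Fin n) (AddMonoidAlgebra K ℤ)) i j).coeff
        (γv j - γv i) = 0 := by
      rw [← auxPhi_apply_coeff K n γv F i j k]
      exact h i j (γv j - γv i + k) (by intro hc; apply hk; push_cast at hc; omega)
    rw [auxEqSingleL1 (auxMemR0entry K n γv (F.coeff k) i j), h2]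
    exact AddMonoidAlgebra.single_zero _
  · intro h i j
    have hF : F = AddMonoidAlgebra.single δ (F.coeff δ) := auxEqSingleC h
    rw [hF, auxPhi_single]
    show (((F.coeff δ : Matrix (Fin n) (Fin n) (AddMonoidAlgebra K ℤ)) *
        Matrix.diagonal (fun _ => AddMonoidAlgebra.single δ (1:K)) :
        Matrix (Fin n) (Fin n) (AddMonoidAlgebra K ℤ))) i j ∈ _
    rw [Matrix.mul_diagonal]
    have h3 := laurentComponent_mul (auxMemR0entry K n γv (F.coeff δ) i j)
      (auxSingleMemL1 (K := K) δ 1)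
    rwa [show γv j - γv i + δ = -(γv i) + δ + γv j from by ring] at h3

end AuxGroupRing

/-- `R = Mₙ(K[x^m, x^{-m}])(γ₁, …, γₙ)` is a group ring over its
degree-zero component `R₀` (i.e. graded isomorphic to `R₀[ℤ]` with its natural grading)
iff `m = 1`, and in that case `R ≅_gr Mₙ(K[x, x⁻¹])(0, …, 0)`. -/
theorem laurentMatrix_groupRing_iff (K : Type) [Field K] (m n : ℕ) (hm : 0 < m)
    (hn : 0 < n) (γv : Fin n → ℤ) :
    (IsGradedIso (matrixComponentZ (laurentComponent K m) n γv)
        (addMonoidAlgebraComponentZ (laurentMatrixZeroSubring K m n γv)) ↔ m = 1) ∧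
    (m = 1 → IsGradedIso (matrixComponentZ (laurentComponent K m) n γv)
        (matrixComponentZ (laurentComponent K 1) n fun _ => (0 : ℤ))) := by
  constructor
  · constructor
    · intro h
      by_contra hm1
      obtain ⟨e, he⟩ := h
      have hmk : ∀ k : ℤ, (m:ℤ) * k ≠ 1 := by
        intro k hk
        rcases Int.isUnit_iff.mp (IsUnit.of_mul_eq_one _ hk) with h2 | h2 <;> omega
      set u := e.symm (AddMonoidAlgebra.single (1:ℤ)
        (1 : laurentMatrixZeroSubring K m n γv)) with hu
      have hu1 : u ∈ matrixComponentZ (laurentComponent K m) n γv 1 := by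
        refine (he 1 u).mpr ?_
        rw [show e u = AddMonoidAlgebra.single (1:ℤ)
          (1 : laurentMatrixZeroSubring K m n γv) from e.apply_symm_apply _]
        exact auxSingleMemC 1 1
      have hd : ∀ i : Fin n, Matrix.single i i (1 : AddMonoidAlgebra K ℤ) ∈
          matrixComponentZ (laurentComponent K m) n γv 0 := by
        intro i k l
        by_cases hkl : i = k ∧ i = l
        · obtain ⟨hk, hl⟩ := hkl
          subst hk
          subst hl
          rw [Matrix.single_apply_same]
          intro k' hk'
          have hk0 : k' ≠ 0 := by
            intro h0
            exact hk' (by rw [h0, mul_zero]; ring)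
          show (AddMonoidAlgebra.single (0:ℤ) (1:K)).coeff k' = 0
          exact Finsupp.single_eq_of_ne' (Ne.symm hk0)
        · rw [Matrix.single_apply_of_ne _ _ _ _ _ hkl]
          exact zero_mem _
      have hcomm : ∀ i : Fin n, u * Matrix.single i i (1 : AddMonoidAlgebra K ℤ) =
          Matrix.single i i (1 : AddMonoidAlgebra K ℤ) * u := by
        intro i
        apply e.injective
        rw [map_mul, map_mul]
        rw [auxEqSingleC ((he 0 _).mp (hd i))]
        rw [show e u = AddMonoidAlgebra.single (1:ℤ)
          (1 : laurentMatrixZeroSubring K m n γv) from e.apply_symm_apply _]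
        rw [AddMonoidAlgebra.single_mul_single, AddMonoidAlgebra.single_mul_single,
          one_mul, mul_one, zero_add, add_zero]
      have hoffd : ∀ i k : Fin n, k ≠ i → u k i = 0 := by
        intro i k hki
        have h1 := congrFun (congrFun (hcomm i) k) i
        rw [Matrix.mul_single_apply_same, mul_one,
          Matrix.single_mul_apply_of_ne _ _ _ _ _ hki] at h1
        exact h1
      have hdiag : ∀ i, u i i = 0 := by
        intro i
        have h2 : u i i ∈ laurentComponent K m 1 := by
          have h3 := hu1 i i
          rwa [show -(γv i) + 1 + γv i = 1 from by ring] at h3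
        apply AddMonoidAlgebra.ext
        apply Finsupp.ext
        intro k
        rw [AddMonoidAlgebra.coeff_zero, Finsupp.coe_zero, Pi.zero_apply]
        exact h2 k (hmk k)
      have hu0 : u = 0 := by
        funext k l
        by_cases hkl : k = l
        · subst hkl
          exact hdiag k
        · exact hoffd l k hkl
      have hs : (AddMonoidAlgebra.single (1:ℤ) (1 : laurentMatrixZeroSubring K m n γv)) *
          AddMonoidAlgebra.single (-1:ℤ) 1 = 1 := by
        rw [AddMonoidAlgebra.single_mul_single, one_mul, add_neg_cancel,
          ← AddMonoidAlgebra.one_def]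
      have h1 : (1 : Matrix (Fin n) (Fin n) (AddMonoidAlgebra K ℤ)) = 0 := by
        calc (1 : Matrix (Fin n) (Fin n) (AddMonoidAlgebra K ℤ)) = e.symm 1 :=
              (map_one e.symm).symm
          _ = e.symm ((AddMonoidAlgebra.single (1:ℤ)
                (1 : laurentMatrixZeroSubring K m n γv)) *
                AddMonoidAlgebra.single (-1:ℤ) 1) := by rw [hs]
          _ = u * e.symm (AddMonoidAlgebra.single (-1:ℤ) 1) := by rw [map_mul]
          _ = 0 := by rw [hu0, zero_mul]
      have h2 := congrFun (congrFun h1 ⟨0, hn⟩) ⟨0, hn⟩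
      rw [Matrix.one_apply_eq, Matrix.zero_apply] at h2
      exact one_ne_zero h2
    · intro hm1
      subst hm1
      refine ⟨(auxE K n γv).symm, fun δ x => ?_⟩
      conv_lhs => rw [← (auxE K n γv).apply_symm_apply x]
      exact auxPhiGraded K n γv δ _
  · intro hm1
    subst hm1
    exact ⟨auxConj K n γv, fun δ a => auxConjGraded K n γv δ a⟩
end
end
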